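/- For any sequence of functions $l_1, \ldots, l_k$ and any order of differentiation $n > 0$: $\overrightarrow{\nabla_x^{(n)} \boxdot(\sum_{i=1}^k l_i(x))} = \overrightarrow{\nabla_x^{(n)} \sum_{i=1}^k (\boxdot(l_i(x)) - 1) \boxdot(\sum_{j=1}^{i-1} l_j(x))}$. -/

import Mathlib

/-- Expressions of one real variable, built from constants, the variable, addition,
multiplication, negation, the exponential, and the stop-gradient operator `⊥`. -/
inductive Expr : Type
  | const : ℝ → Expr
  | var : Expr
  | add : Expr → Expr → Expr
  | mul : Expr → Expr → Expr
  | neg : Expr → Expr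
  | exp : Expr → Expr
  | bot : Expr → Expr

/-- Forward-mode evaluation: the stop-gradient operator acts as the identity. -/
noncomputable def Expr.fwd : Expr → ℝ → ℝ
  | const c, _ => c
  | var, x => x
  | add a b, x => a.fwd x + b.fwd x
  | mul a b, x => a.fwd x * b.fwd x
  | neg a, x => -(a.fwd x)
  | exp a, x => Real.exp (a.fwd x)
  | bot a, x => a.fwd x

/-- Symbolic differentiation: `∇ₓ ⊥(f x) = 0`. -/
def Expr.D : Expr → Expr
  | const _ => const 0
  | var => const 1
  | add a b => add a.D b.D
  | mul a b => add (mul a.D b) (mul a b.D)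
  | neg a => neg a.D
  | exp a => mul (exp a) a.D
  | bot _ => const 0

/-- The MagicBox operator `⊡(e) = exp (e - ⊥(e))`. -/
def magicbox (e : Expr) : Expr := Expr.exp (Expr.add e (Expr.neg (Expr.bot e)))

/-- Sum of a list of expressions. -/
def sumE : List Expr → Expr
  | [] => Expr.const 0
  | e :: es => Expr.add e (sumE es)

/-- Two-variable semantics: `x` is the active variable, `y` the frozen one. -/
noncomputable def ev : Expr → ℝ → ℝ → ℝ
  | .const c, _, _ => c
  | .var, x, _ => x
  | .add a b, x, y => ev a x y + ev b x y
  | .mul a b, x, y => ev a x y * ev b x y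
  | .neg a, x, y => -(ev a x y)
  | .exp a, x, y => Real.exp (ev a x y)
  | .bot a, _, y => a.fwd y

lemma fwd_eq_ev (e : Expr) (x : ℝ) : e.fwd x = ev e x x := by
  induction e <;> simp [Expr.fwd, ev, *]

lemma hasDerivAt_ev (e : Expr) (y x : ℝ) :
    HasDerivAt (fun t => ev e t y) (ev (Expr.D e) x y) x := by
  induction e with
  | const c => simpa [ev, Expr.D] using hasDerivAt_const x c
  | var => simp only [ev, Expr.D]; exact hasDerivAt_id' x
  | add a b iha ihb => exact (iha).add ihb
  | mul a b iha ihb => simp only [ev, Expr.D]; exact (iha).mul ihb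
  | neg a iha => simp only [ev, Expr.D]; exact iha.neg
  | exp a iha => simpa [ev, Expr.D, mul_comm] using iha.exp
  | bot a iha => simpa [ev, Expr.D] using hasDerivAt_const x (a.fwd y)

lemma ev_D (e : Expr) (y x : ℝ) :
    ev (Expr.D e) x y = deriv (fun t => ev e t y) x :=
  (hasDerivAt_ev e y x).deriv.symm

lemma ev_Dn (e : Expr) (n : ℕ) (y : ℝ) :
    (fun t => ev (Expr.D^[n] e) t y) = iteratedDeriv n (fun t => ev e t y) := by
  induction n with
  | zero => simp
  | succ n ih =>
      funext x
      rw [Function.iterate_succ_apply', iteratedDeriv_succ, ev_D, ih]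

lemma ev_magicbox (e : Expr) (x y : ℝ) :
    ev (magicbox e) x y = Real.exp (ev e x y - e.fwd y) := by
  simp [magicbox, ev, sub_eq_add_neg]

lemma ev_sumE_ofFn (k : ℕ) (F : Fin k → Expr) (x y : ℝ) :
    ev (sumE (List.ofFn F)) x y = ∑ i, ev (F i) x y := by
  induction k with
  | zero => simp [sumE, ev]
  | succ k ih => rw [List.ofFn_succ]; simp [sumE, ev, ih, Fin.sum_univ_succ]

lemma fwd_sumE_ofFn (k : ℕ) (F : Fin k → Expr) (y : ℝ) :
    (sumE (List.ofFn F)).fwd y = ∑ i, (F i).fwd y := by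
  simp [fwd_eq_ev, ev_sumE_ofFn]

/-- Key pointwise identity: the baseline decomposition equals `⊡(∑ l) - 1`. -/
lemma key (k : ℕ) (l : Fin k → Expr) (x y : ℝ) :
    ev (sumE (List.ofFn fun i : Fin k =>
        Expr.mul (Expr.add (magicbox (l i)) (Expr.neg (Expr.const 1)))
          (magicbox (sumE ((List.ofFn l).take i))))) x y
      = ev (magicbox (sumE (List.ofFn l))) x y - 1 := by
  induction k with
  | zero => simp [sumE, ev_magicbox, Expr.fwd, List.ofFn_zero, ev]
  | succ k ih =>
      have hih := ih (fun i => l i.succ)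
      rw [ev_sumE_ofFn] at hih ⊢
      rw [Fin.sum_univ_succ]
      have esplit : ∀ a b c d : ℝ,
          Real.exp (a + c + -(b + d)) = Real.exp (a + -b) * Real.exp (c + -d) := by
        intros a b c d; rw [← Real.exp_add]; ring_nf
      have hterm : ∀ i : Fin k,
          ev (Expr.mul (Expr.add (magicbox (l i.succ)) (Expr.neg (Expr.const 1)))
            (magicbox (sumE ((List.ofFn l).take i.succ)))) x y
          = Real.exp (ev (l 0) x y + -((l 0).fwd y)) *
            ev (Expr.mul (Expr.add (magicbox (l i.succ)) (Expr.neg (Expr.const 1)))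
              (magicbox (sumE ((List.ofFn fun j : Fin k => l j.succ).take i)))) x y := by
        intro i
        rw [List.ofFn_succ, Fin.val_succ, List.take_succ_cons]
        simp only [ev, ev_magicbox, sumE, Expr.fwd, fwd_eq_ev, sub_eq_add_neg]
        rw [esplit]
        ring
      simp only [hterm, ← Finset.mul_sum, hih]
      simp only [List.ofFn_succ, sumE, ev_magicbox, ev, Expr.fwd, fwd_eq_ev, sub_eq_add_neg]
      rw [esplit]
      simp only [Fin.val_zero, List.take_zero, sumE, ev_magicbox, ev, Expr.fwd, neg_zero, add_zero,
        Real.exp_zero, sub_eq_add_neg]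
      ring

/-- For any sequence of expressions `l₁, …, l_k` and any order of differentiation `n > 0`,
`∇ₓⁿ ⊡(∑ᵢ lᵢ(x))` equals, under forward evaluation,
`∇ₓⁿ ∑ᵢ (⊡(lᵢ(x)) - 1) ⊡(∑_{j<i} lⱼ(x))`. -/
theorem magicbox_baseline_decomposition (k : ℕ) (l : Fin k → Expr) (n : ℕ) (hn : 0 < n)
    (x : ℝ) :
    (Expr.D^[n] (magicbox (sumE (List.ofFn l)))).fwd x
      = (Expr.D^[n] (sumE (List.ofFn fun i : Fin k =>
          Expr.mul (Expr.add (magicbox (l i)) (Expr.neg (Expr.const 1)))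
            (magicbox (sumE ((List.ofFn l).take i)))))).fwd x := by
  rcases n with _ | m
  · exact absurd hn (lt_irrefl 0)
  set eL := magicbox (sumE (List.ofFn l)) with heL
  set eR := sumE (List.ofFn fun i : Fin k =>
      Expr.mul (Expr.add (magicbox (l i)) (Expr.neg (Expr.const 1)))
        (magicbox (sumE ((List.ofFn l).take i)))) with heR
  rw [fwd_eq_ev, fwd_eq_ev,
    congrFun (ev_Dn eL (m + 1) x) x, congrFun (ev_Dn eR (m + 1) x) x]
  have hfun : (fun t => ev eR t x) = fun t => ev eL t x - 1 :=
    funext fun t => key k l t x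
  rw [hfun, iteratedDeriv_succ', iteratedDeriv_succ']
  congr 1
  funext t
  exact (deriv_sub_const 1).symm
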